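/- Let n ≥ 2 be an integer, let 0 < d ≤ π, let H ∈ ℝ, r₀ ∈ ℝ and ψ > 0. If 1 ≤ ψ · ∫_{r₀−d}^{r₀} (max(cos t − H sin t, 0))^{n−1} dt, then ψ (1 + H²)^{(n−1)/2} ≥ ( ∫_{−d/2}^{d/2} (cos t)^{n−1} dt )^{−1}. -/

import Mathlib

open Real intervalIntegral

private lemma hk_cont (m : ℕ) : Continuous fun t => (max (Real.cos t) 0) ^ m :=
  (Real.continuous_cos.max continuous_const).pow m

/-- pointwise comparison used for monotonicity of the sliding integral -/
private lemma hk_f_le (m : ℕ) (hm : m ≠ 0) (d : ℝ) (hd : 0 < d) (hdπ : d ≤ Real.pi)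
    (a : ℝ) (ha : 0 ≤ a) (haπ : a ≤ Real.pi) :
    (max (Real.cos (a + d / 2)) 0) ^ m ≤ (max (Real.cos (a - d / 2)) 0) ^ m := by
  rcases le_or_gt (Real.cos (a + d / 2)) 0 with hc | hc
  · rw [max_eq_right hc, zero_pow hm]
    positivity
  · -- cos (a + d/2) > 0; since 0 < a + d/2 ≤ π + π/2, we get a + d/2 < π/2
    have hy : a + d / 2 < Real.pi / 2 := by
      by_contra hy
      push_neg at hy
      exact absurd (Real.cos_nonpos_of_pi_div_two_le_of_le hy (by linarith)) (by linarith)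
    have hxle : |a - d / 2| ≤ a + d / 2 := by
      rw [abs_le]; constructor <;> linarith
    have hcos : Real.cos (a + d / 2) ≤ Real.cos (a - d / 2) := by
      rw [← Real.cos_abs (a - d / 2)]
      apply Real.cos_le_cos_of_nonneg_of_le_pi (abs_nonneg _) (by linarith)
      exact hxle
    apply pow_le_pow_left₀ (le_max_right _ _)
    exact max_le_max hcos le_rfl

/-- the centered sliding integral is maximized at center 0 -/
private lemma hk_slide (m : ℕ) (hm : m ≠ 0) (d : ℝ) (hd : 0 < d) (hdπ : d ≤ Real.pi) (a : ℝ) :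
    (∫ t in (a - d / 2)..(a + d / 2), (max (Real.cos t) 0) ^ m) ≤
      ∫ t in (-(d / 2))..(d / 2), (max (Real.cos t) 0) ^ m := by
  set f : ℝ → ℝ := fun t => (max (Real.cos t) 0) ^ m with hf
  have hfc : Continuous f := hk_cont m
  set G : ℝ → ℝ := fun a => ∫ t in (a - d / 2)..(a + d / 2), f t with hG
  -- G is even
  have hGeven : ∀ b : ℝ, G (-b) = G b := by
    intro b
    have : ∀ x : ℝ, f (-x) = f x := by
      intro x; simp [hf, Real.cos_neg]
    calc G (-b) = ∫ t in (-(b + d/2))..(-(b - d/2)), f t := by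
          show (∫ t in (-b - d/2)..(-b + d/2), f t) = _
          congr 1 <;> ring
      _ = ∫ t in (b - d/2)..(b + d/2), f (-t) := by
          rw [intervalIntegral.integral_comp_neg fun t => f t]
      _ = G b := by simp only [this]; rfl
  -- G is periodic with period 2π
  have hGper : ∀ b : ℝ, ∀ k : ℤ, G (b + k * (2 * Real.pi)) = G b := by
    intro b k
    have : ∀ x : ℝ, f (x + k * (2 * Real.pi)) = f x := by
      intro x; simp [hf, Real.cos_add_int_mul_two_pi]
    calc G (b + k * (2 * Real.pi))
        = ∫ t in (b - d/2 + k * (2*Real.pi))..(b + d/2 + k * (2*Real.pi)), f t := by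
          show (∫ t in (b + k * (2*Real.pi) - d/2)..(b + k * (2*Real.pi) + d/2), f t) = _
          congr 1 <;> ring
      _ = ∫ t in (b - d/2)..(b + d/2), f (t + k * (2*Real.pi)) := by
          rw [intervalIntegral.integral_comp_add_right (fun t => f t)]
      _ = G b := by simp only [this]; rfl
  -- G is antitone on [0, π]
  have hGanti : AntitoneOn G (Set.Icc 0 Real.pi) := by
    have hderiv : ∀ x : ℝ, HasDerivAt G (f (x + d/2) - f (x - d/2)) x := by
      intro x
      set F : ℝ → ℝ := fun b => ∫ t in (0:ℝ)..b, f t with hF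
      have hFd : ∀ y : ℝ, HasDerivAt F (f y) y := fun y =>
        (intervalIntegral.integral_hasStrictDerivAt_right (hfc.intervalIntegrable _ _)
          (hfc.stronglyMeasurableAtFilter _ _) hfc.continuousAt).hasDerivAt
      have h1 : HasDerivAt (fun b => F (b + d/2)) (f (x + d/2)) x := by
        simpa [Function.comp_def] using (hFd (x + d/2)).comp x ((hasDerivAt_id x).add_const (d/2))
      have h2 : HasDerivAt (fun b => F (b - d/2)) (f (x - d/2)) x := by
        simpa [Function.comp_def] using (hFd (x - d/2)).comp x ((hasDerivAt_id x).sub_const (d/2))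
      have key : G = fun b => F (b + d/2) - F (b - d/2) := by
        funext b
        rw [hG, hF]
        exact (intervalIntegral.integral_interval_sub_left
          (hfc.intervalIntegrable _ _) (hfc.intervalIntegrable _ _)).symm
      rw [key]
      exact h1.sub h2
    apply antitoneOn_of_deriv_nonpos (convex_Icc 0 Real.pi)
    · exact fun x _ => (hderiv x).differentiableAt.continuousAt.continuousWithinAt
    · exact fun x _ => (hderiv x).differentiableAt.differentiableWithinAt
    · intro x hx
      rw [interior_Icc] at hx
      rw [(hderiv x).deriv]
      have := hk_f_le m hm d hd hdπ x hx.1.le hx.2.le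
      simpa [hf] using sub_nonpos.mpr this
  -- reduce a to [-π, π) using periodicity
  have h2π : (0:ℝ) < 2 * Real.pi := by positivity
  set a' := toIcoMod h2π (-Real.pi) a with ha'
  have hmem := toIcoMod_mem_Ico h2π (-Real.pi) a
  have hsub := self_sub_toIcoMod h2π (-Real.pi) a
  have hGa : G a = G a' := by
    have : a = a' + (toIcoDiv h2π (-Real.pi) a) * (2 * Real.pi) := by
      have := hsub; rw [zsmul_eq_mul] at this; linarith
    rw [this, hGper]
  have hgoal : G a' ≤ G 0 := by
    rcases le_or_gt 0 a' with hpos | hneg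
    · apply hGanti (Set.mem_Icc.mpr ⟨le_rfl, Real.pi_nonneg⟩)
        (Set.mem_Icc.mpr ⟨hpos, by linarith [hmem.2]⟩) hpos
    · rw [← hGeven a']
      apply hGanti (Set.mem_Icc.mpr ⟨le_rfl, Real.pi_nonneg⟩)
        (Set.mem_Icc.mpr ⟨by linarith, by linarith [hmem.1]⟩) (by linarith)
  have hG0 : G 0 = ∫ t in (-(d / 2))..(d / 2), f t := by
    rw [hG]; norm_num
  rw [← hG0]
  calc (∫ t in (a - d / 2)..(a + d / 2), f t) = G a := rfl
    _ = G a' := hGa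
    _ ≤ G 0 := hgoal

theorem heintze_karcher_consequence
    (n : ℕ) (hn : 2 ≤ n) (d H r₀ ψ : ℝ) (hd : 0 < d) (hdπ : d ≤ Real.pi) (hψ : 0 < ψ)
    (h : 1 ≤ ψ * ∫ t in (r₀ - d)..r₀, (max (Real.cos t - H * Real.sin t) 0) ^ (n - 1)) :
    (∫ t in (-(d / 2))..(d / 2), (Real.cos t) ^ (n - 1))⁻¹ ≤
      ψ * (1 + H ^ 2) ^ (((n : ℝ) - 1) / 2) := by
  have hm : n - 1 ≠ 0 := by omega
  set m := n - 1 with hmdef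
  have h1H : (0:ℝ) < 1 + H ^ 2 := by positivity
  set c := Real.sqrt (1 + H ^ 2) with hc
  have hc0 : 0 < c := Real.sqrt_pos.mpr h1H
  set φ := Real.arctan H with hφ
  -- rewrite the integrand
  have hkey : ∀ t : ℝ, Real.cos t - H * Real.sin t = c * Real.cos (t + φ) := by
    intro t
    rw [Real.cos_add, hφ, Real.cos_arctan, Real.sin_arctan, hc]
    field_simp
  have hmax : ∀ t : ℝ, (max (Real.cos t - H * Real.sin t) 0) ^ m
      = c ^ m * (max (Real.cos (t + φ)) 0) ^ m := by
    intro t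
    rw [hkey t, ← mul_pow]
    congr 1
    rw [mul_max_of_nonneg _ _ hc0.le, mul_zero]
  have hint : (∫ t in (r₀ - d)..r₀, (max (Real.cos t - H * Real.sin t) 0) ^ m)
      = c ^ m * ∫ t in (r₀ - d + φ)..(r₀ + φ), (max (Real.cos t) 0) ^ m := by
    rw [← intervalIntegral.integral_comp_add_right (fun t => (max (Real.cos t) 0) ^ m) φ,
      ← intervalIntegral.integral_const_mul]
    exact intervalIntegral.integral_congr fun t _ => hmax t
  -- apply the sliding lemma with center a = r₀ + φ - d/2
  have hslide := hk_slide m hm d hd hdπ (r₀ + φ - d / 2)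
  have hI : (∫ t in (-(d / 2))..(d / 2), (max (Real.cos t) 0) ^ m)
      = ∫ t in (-(d / 2))..(d / 2), (Real.cos t) ^ m := by
    apply intervalIntegral.integral_congr
    intro t ht
    rw [Set.uIcc_of_le (by linarith), Set.mem_Icc] at ht
    have : 0 ≤ Real.cos t := by
      apply Real.cos_nonneg_of_mem_Icc
      constructor <;> [linarith [Real.pi_pos, ht.1]; linarith [ht.2]]
    show (max (Real.cos t) 0) ^ m = Real.cos t ^ m
    rw [max_eq_left this]
  set I := ∫ t in (-(d / 2))..(d / 2), (Real.cos t) ^ m with hIdef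
  have hIpos : 0 < I := by
    apply intervalIntegral.intervalIntegral_pos_of_pos_on
      ((Real.continuous_cos.pow m).intervalIntegrable _ _)
    · intro x hx
      have : 0 < Real.cos x := by
        apply Real.cos_pos_of_mem_Ioo
        constructor <;> [linarith [hx.1]; linarith [hx.2]]
      exact pow_pos this m
    · linarith
  -- combine
  have hchain : 1 ≤ ψ * (c ^ m * I) := by
    calc (1:ℝ) ≤ ψ * ∫ t in (r₀ - d)..r₀, (max (Real.cos t - H * Real.sin t) 0) ^ m := h
      _ = ψ * (c ^ m * ∫ t in (r₀ - d + φ)..(r₀ + φ), (max (Real.cos t) 0) ^ m) := by rw [hint]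
      _ ≤ ψ * (c ^ m * I) := by
          apply mul_le_mul_of_nonneg_left _ hψ.le
          apply mul_le_mul_of_nonneg_left _ (by positivity)
          rw [← hI]
          have he : r₀ + φ - d / 2 - d / 2 = r₀ - d + φ := by ring
          have he2 : r₀ + φ - d / 2 + d / 2 = r₀ + φ := by ring
          rw [he, he2] at hslide
          exact hslide
  have hcm : c ^ m = (1 + H ^ 2) ^ (((n : ℝ) - 1) / 2) := by
    rw [hc, Real.sqrt_eq_rpow, ← Real.rpow_natCast ((1 + H ^ 2) ^ ((1:ℝ)/2)) m,
      ← Real.rpow_mul h1H.le]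
    congr 1
    have : (m : ℝ) = (n : ℝ) - 1 := by
      rw [hmdef, Nat.cast_sub (by omega)]; norm_num
    rw [this]; ring
  rw [inv_le_iff_one_le_mul₀ hIpos]
  calc (1:ℝ) ≤ ψ * (c ^ m * I) := hchain
    _ = ψ * (1 + H ^ 2) ^ (((n : ℝ) - 1) / 2) * I := by rw [hcm]; ring
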